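/- Let α > 1, η > 0, K ≥ 1 an integer, and L ∈ [0,∞)^K with L_1 ≤ L_2 ≤ … ≤ L_K and L_1 = 0. Define q_i := (min(1/(1+ηL_i), i^{-1/α}))^{(α+1)/2} for i ∈ {1,…,K}, and p_i := q_i / ∑_{j=1}^K q_j. For λ ∈ ℝ^K let λ̲ := λ − (min_j λ_j)·𝟏 and φ_i(λ) := ∫_1^∞ α (z+λ̲_i)^{-(α+1)} ∏_{j≠i} (1 − (z+λ̲_j)^{-α}) dz. Then for every i ∈ {1,…,K} and every ℓ ∈ [0,1]: ℓ · ( φ_i(ηL) − φ_i(η(L + (ℓ/p_i)·e_i)) ) ≤ e(α+1)·η · (∑_{j=1}^K q_j) · q_i, where e_i is the i-th standard basis vector. -/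

import Mathlib

open MeasureTheory Set Filter Topology
set_option linter.unusedSectionVars false


/-- The FTPL arm-selection probability with Pareto(α) perturbations:
`φ_i(λ) = ∫_1^∞ α (z+λ̲_i)^{-(α+1)} ∏_{j≠i} (1 − (z+λ̲_j)^{-α}) dz`
where `λ̲ = λ − (min_j λ_j)·𝟏`. -/
noncomputable def ftplProb (α : ℝ) (K : ℕ) (i : Fin K) (lam : Fin K → ℝ) : ℝ :=
  ∫ z in Set.Ioi (1 : ℝ),
    α * (z + (lam i - ⨅ j, lam j)) ^ (-(α + 1)) *
      ∏ j ∈ Finset.univ.erase i, (1 - (z + (lam j - ⨅ j, lam j)) ^ (-α))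


lemma setIntegral_Ioi_comp_add (f : ℝ → ℝ) (a c : ℝ) :
    ∫ x in Set.Ioi a, f (x + c) = ∫ x in Set.Ioi (a + c), f x := by
  rw [← integral_indicator measurableSet_Ioi, ← integral_indicator measurableSet_Ioi]
  rw [show (Set.Ioi a).indicator (fun x => f (x + c)) = fun x => (Set.Ioi (a+c)).indicator f (x+c) by
    funext x
    by_cases h : x ∈ Set.Ioi a
    · rw [Set.indicator_of_mem h, Set.indicator_of_mem (by simp at h ⊢; linarith)]
    · rw [Set.indicator_of_notMem h, Set.indicator_of_notMem (by simp at h ⊢; linarith)]]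
  exact integral_add_right_eq_self _ c

lemma integrableOn_Ioi_comp_add {f : ℝ → ℝ} {a c : ℝ} (h : IntegrableOn f (Set.Ioi (a + c))) :
    IntegrableOn (fun x => f (x + c)) (Set.Ioi a) := by
  have := (integrable_indicator_iff (measurableSet_Ioi (a := a + c))).mpr h
  have h2 := this.comp_add_right c
  refine (integrable_indicator_iff measurableSet_Ioi).mp ?_
  refine h2.congr (ae_of_all _ fun x => ?_)
  show (Set.Ioi (a+c)).indicator f (x + c) = (Set.Ioi a).indicator (fun x => f (x + c)) x
  by_cases hx : x ∈ Set.Ioi a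
  · rw [Set.indicator_of_mem hx, Set.indicator_of_mem (by simp at hx ⊢; linarith)]
  · rw [Set.indicator_of_notMem hx, Set.indicator_of_notMem (by simp at hx ⊢; linarith)]

lemma integral_Ioi_rpow_shift {p c A : ℝ} (hp : p < -1) (h : 0 < A + c) :
    ∫ z in Set.Ioi A, (z + c) ^ p = -(A + c) ^ (p + 1) / (p + 1) := by
  rw [setIntegral_Ioi_comp_add (fun z => z ^ p) A c]
  exact integral_Ioi_rpow_of_lt hp h

lemma integrableOn_Ioi_rpow_shift {p c A : ℝ} (hp : p < -1) (h : 0 < A + c) :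
    IntegrableOn (fun z => (z + c) ^ p) (Set.Ioi A) :=
  integrableOn_Ioi_comp_add (f := fun z => z ^ p) (a := A) (c := c)
    (integrableOn_Ioi_rpow_of_lt hp h)

lemma mvt_rpow_bound {β x δ : ℝ} (hβ : 0 < β) (hx : 0 < x) (hδ : 0 ≤ δ) :
    x ^ (-β) - (x + δ) ^ (-β) ≤ δ * β * x ^ (-β - 1) := by
  rcases eq_or_lt_of_le hδ with rfl | hδ'
  · simp
  have hderiv : ∀ t ∈ Set.Ioo x (x + δ), HasDerivAt (fun t : ℝ => t ^ (-β)) (-β * t ^ (-β - 1)) t := by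
    intro t ht
    exact Real.hasDerivAt_rpow_const (Or.inl (by nlinarith [ht.1]))
  have hcont : ContinuousOn (fun t : ℝ => t ^ (-β)) (Set.Icc x (x + δ)) := by
    apply ContinuousOn.rpow_const continuousOn_id
    intro t ht
    exact Or.inl (by simp only [id_eq]; nlinarith [ht.1])
  obtain ⟨ξ, hξ, heq⟩ := exists_hasDerivAt_eq_slope (fun t : ℝ => t ^ (-β))
    (fun t => -β * t ^ (-β - 1)) (by linarith) hcont hderiv
  have hslope : (x + δ) ^ (-β) - x ^ (-β) = δ * (-β * ξ ^ (-β - 1)) := by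
    field_simp at heq
    rw [add_sub_cancel_left, eq_div_iff hδ'.ne'] at heq
    rw [← heq]; ring
  have hmono : ξ ^ (-β - 1) ≤ x ^ (-β - 1) := by
    apply Real.rpow_le_rpow_of_nonpos hx (le_of_lt hξ.1) (by linarith)
  have := mul_le_mul_of_nonneg_left hmono (by positivity : (0:ℝ) ≤ δ * β)
  nlinarith


section
variable {α c : ℝ} (hα : 1 < α) (hc : 0 ≤ c)

lemma contOn_u {s : Set ℝ} (hs : ∀ z ∈ s, 0 < z + c) (p : ℝ) :
    ContinuousOn (fun z : ℝ => (z + c) ^ p) s := by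
  apply ContinuousOn.rpow_const (by fun_prop)
  intro z hz; exact Or.inl (ne_of_gt (hs z hz))

include hα hc in
lemma hasDeriv_H (m : ℕ) {z : ℝ} (hz : 0 < z + c) :
    HasDerivAt (fun z : ℝ => (1 - (z+c)^(-α))^(m+1)/(m+1) - (1 - (z+c)^(-α))^(m+2)/(m+2))
      (α * (z+c)^(-α-1) * ((z+c)^(-α) * (1 - (z+c)^(-α))^m)) z := by
  have hu : HasDerivAt (fun z : ℝ => (z+c)^(-α)) (-α * (z+c)^(-α-1)) z := by
    have h1 : HasDerivAt (fun z : ℝ => z + c) 1 z := (hasDerivAt_id z).add_const c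
    have h2 := (Real.hasDerivAt_rpow_const (x := z + c) (p := -α) (Or.inl (ne_of_gt hz))).comp z h1
    simpa [Function.comp_def] using h2
  have hv : HasDerivAt (fun z : ℝ => 1 - (z+c)^(-α)) (α * (z+c)^(-α-1)) z := by
    exact ((hasDerivAt_const z (1:ℝ)).sub hu).congr_deriv (by ring)
  have hv1 := (hv.pow (m+1)).div_const ((m:ℝ)+1)
  have hv2 := (hv.pow (m+2)).div_const ((m:ℝ)+2)
  have h := hv1.sub hv2
  refine h.congr_deriv ?_
  have hm1 : ((m:ℝ)+1) ≠ 0 := by positivity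
  have hm2 : ((m:ℝ)+2) ≠ 0 := by positivity
  field_simp
  push_cast
  ring

include hα hc in
lemma beta_tail_integral (m : ℕ) :
    ∫ z in Set.Ioi (1:ℝ), α * (z+c)^(-α-1) * ((z+c)^(-α) * (1 - (z+c)^(-α))^m)
      ≤ 1/(((m:ℝ)+1)*((m:ℝ)+2)) := by
  set H : ℝ → ℝ := fun z => (1 - (z+c)^(-α))^(m+1)/(m+1) - (1 - (z+c)^(-α))^(m+2)/(m+2) with hH
  have hpos : ∀ z ∈ Set.Ici (1:ℝ), 0 < z + c := fun z hz => by
    simp only [mem_Ici] at hz; linarith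
  have hposIoi : ∀ z ∈ Set.Ioi (1:ℝ), 0 < z + c := fun z hz => by
    simp only [mem_Ioi] at hz; linarith
  have hcont : ContinuousWithinAt H (Set.Ici 1) 1 := by
    apply ContinuousOn.continuousWithinAt _ (self_mem_Ici)
    apply ContinuousOn.sub
    · exact (((continuousOn_const.sub (contOn_u hpos (-α))).pow (m+1)).div_const _)
    · exact (((continuousOn_const.sub (contOn_u hpos (-α))).pow (m+2)).div_const _)
  have hint : IntegrableOn (fun z : ℝ => α * (z+c)^(-α-1) * ((z+c)^(-α) * (1 - (z+c)^(-α))^m))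
      (Set.Ioi 1) := by
    apply Integrable.mono' (g := fun z : ℝ => α * (z+c)^(-α-1))
    · exact (integrableOn_Ioi_rpow_shift (by linarith) (by linarith)).const_mul α
    · apply ContinuousOn.aestronglyMeasurable _ measurableSet_Ioi
      exact ((continuousOn_const.mul (contOn_u hposIoi (-α-1))).mul
        ((contOn_u hposIoi (-α)).mul ((continuousOn_const.sub (contOn_u hposIoi (-α))).pow m)))
    · rw [ae_restrict_iff' measurableSet_Ioi]
      refine ae_of_all _ (fun z hz => ?_)
      have h1 : 0 < z + c := hposIoi z hz
      have hzc1 : (1:ℝ) ≤ z + c := by simp only [mem_Ioi] at hz; linarith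
      have hu0 : 0 ≤ (z+c)^(-α) := Real.rpow_nonneg h1.le _
      have hu1 : (z+c)^(-α) ≤ 1 := by
        rw [Real.rpow_neg h1.le]
        apply inv_le_one_of_one_le₀
        calc (1:ℝ) = 1 ^ α := (Real.one_rpow α).symm
        _ ≤ (z+c)^α := Real.rpow_le_rpow zero_le_one hzc1 (by linarith)
      have hf0 : 0 ≤ α * (z+c)^(-α-1) := by positivity
      have hp0 : (0:ℝ) ≤ (1 - (z+c)^(-α))^m := pow_nonneg (by linarith) m
      have hp1 : (1 - (z+c)^(-α))^m ≤ 1 := pow_le_one₀ (by linarith) (by linarith)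
      have hX0 : 0 ≤ (z+c)^(-α) * (1 - (z+c)^(-α))^m := mul_nonneg hu0 hp0
      have hX1 : (z+c)^(-α) * (1 - (z+c)^(-α))^m ≤ 1 := by nlinarith
      rw [Real.norm_eq_abs, abs_of_nonneg (by positivity)]
      exact mul_le_of_le_one_right hf0 hX1
  have htend : Tendsto H atTop (𝓝 (1/(((m:ℝ)+1)) - 1/((m:ℝ)+2))) := by
    have h1 : Tendsto (fun z : ℝ => (z+c)^(-α)) atTop (𝓝 0) := by
      have := (tendsto_rpow_neg_atTop (by linarith : 0 < α)).comp
        (tendsto_atTop_add_const_right atTop c tendsto_id)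
      simpa [Function.comp_def] using this
    have hF : ContinuousAt (fun u : ℝ => (1-u)^(m+1)/((m:ℝ)+1) - (1-u)^(m+2)/((m:ℝ)+2)) 0 := by
      fun_prop
    have := hF.tendsto.comp h1
    simp only [Function.comp_def] at this
    convert this using 2 <;> simp
  have heq := integral_Ioi_of_hasDerivAt_of_tendsto hcont
    (fun z hz => hasDeriv_H hα hc m (hposIoi z hz)) hint htend
  rw [heq]
  have hu0 : 0 ≤ (1+c)^(-α) := Real.rpow_nonneg (by linarith) _
  have hu1 : (1+c)^(-α) ≤ 1 := by
    rw [Real.rpow_neg (by linarith)]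
    apply inv_le_one_of_one_le₀
    calc (1:ℝ) = 1 ^ α := (Real.one_rpow α).symm
    _ ≤ (1+c)^α := Real.rpow_le_rpow zero_le_one (by linarith) (by linarith)
  have hH1 : 0 ≤ H 1 := by
    simp only [hH]
    set v := 1 - (1+(c:ℝ))^(-α) with hv
    have hv0 : 0 ≤ v := by simp [hv]; linarith
    have hv1 : v ≤ 1 := by simp [hv]; linarith
    have h2 : v^(m+2) ≤ v^(m+1) := pow_le_pow_of_le_one hv0 hv1 (by omega)
    have hm1 : (0:ℝ) < (m:ℝ)+1 := by positivity
    have hm2 : (0:ℝ) < (m:ℝ)+2 := by positivity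
    have : v^(m+2)/((m:ℝ)+2) ≤ v^(m+1)/((m:ℝ)+1) := by
      apply div_le_div₀ (pow_nonneg hv0 _) h2 hm1 (by linarith)
    linarith
  have heq2 : 1/(((m:ℝ)+1)) - 1/((m:ℝ)+2) = 1/(((m:ℝ)+1)*((m:ℝ)+2)) := by
    have hm1 : ((m:ℝ)+1) ≠ 0 := by positivity
    have hm2 : ((m:ℝ)+2) ≠ 0 := by positivity
    field_simp
    ring
  rw [heq2]
  exact sub_le_self _ hH1

include hα in
lemma u_bounds {z : ℝ} (h1 : 1 ≤ z + c) : 0 ≤ (z+c)^(-α) ∧ (z+c)^(-α) ≤ 1 := by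
  have h0 : (0:ℝ) < z + c := by linarith
  refine ⟨Real.rpow_nonneg h0.le _, ?_⟩
  rw [Real.rpow_neg h0.le]
  apply inv_le_one_of_one_le₀
  calc (1:ℝ) = 1 ^ α := (Real.one_rpow α).symm
  _ ≤ (z+c)^α := Real.rpow_le_rpow zero_le_one h1 (by linarith)

include hα hc in
lemma F_ptwise (m : ℕ) {z : ℝ} (hz : 1 < z) :
    α * (z+c)^(-(α+2)) * (1-(z+c)^(-α))^m ≤ α * (z+c)^(-(α+2))
    ∧ 0 ≤ α * (z+c)^(-(α+2)) * (1-(z+c)^(-α))^m := by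
  have h1 : (1:ℝ) ≤ z + c := by linarith
  have h0 : (0:ℝ) < z + c := by linarith
  have hu0 : 0 ≤ (z+c)^(-α) := Real.rpow_nonneg h0.le _
  have hu1 : (z+c)^(-α) ≤ 1 := by
    rw [Real.rpow_neg h0.le]
    apply inv_le_one_of_one_le₀
    calc (1:ℝ) = 1 ^ α := (Real.one_rpow α).symm
    _ ≤ (z+c)^α := Real.rpow_le_rpow zero_le_one h1 (by linarith)
  have hp0 : (0:ℝ) ≤ (1 - (z+c)^(-α))^m := pow_nonneg (by linarith) m
  have hp1 : (1 - (z+c)^(-α))^m ≤ 1 := pow_le_one₀ (by linarith) (by linarith)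
  have hb : (0:ℝ) ≤ α * (z+c)^(-(α+2)) := by
    have := Real.rpow_nonneg h0.le (-(α+2))
    positivity
  exact ⟨mul_le_of_le_one_right hb hp1, mul_nonneg hb hp0⟩

include hα hc in
lemma F_integrable (m : ℕ) {A : ℝ} (hA : 1 ≤ A) :
    IntegrableOn (fun z : ℝ => α * (z+c)^(-(α+2)) * (1-(z+c)^(-α))^m) (Set.Ioi A) := by
  have hpos : ∀ z ∈ Set.Ioi A, 0 < z + c := fun z hz => by
    simp only [mem_Ioi] at hz; linarith
  apply Integrable.mono' (g := fun z : ℝ => α * (z+c)^(-(α+2)))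
  · exact (integrableOn_Ioi_rpow_shift (by linarith) (by linarith)).const_mul α
  · apply ContinuousOn.aestronglyMeasurable _ measurableSet_Ioi
    exact (continuousOn_const.mul (contOn_u hpos _)).mul
      ((continuousOn_const.sub (contOn_u hpos _)).pow m)
  · rw [ae_restrict_iff' measurableSet_Ioi]
    refine ae_of_all _ fun z hz => ?_
    simp only [mem_Ioi] at hz
    obtain ⟨hle, h0⟩ := F_ptwise hα hc m (by linarith : 1 < z)
    rw [Real.norm_eq_abs, abs_of_nonneg h0]
    exact hle

include hα hc in
lemma G_integrable (m : ℕ) :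
    IntegrableOn (fun z : ℝ => α * (z+c)^(-α-1) * ((z+c)^(-α) * (1 - (z+c)^(-α))^m))
      (Set.Ioi 1) := by
  have hpos : ∀ z ∈ Set.Ioi (1:ℝ), 0 < z + c := fun z hz => by
    simp only [mem_Ioi] at hz; linarith
  apply Integrable.mono' (g := fun z : ℝ => α * (z+c)^(-α-1))
  · exact (integrableOn_Ioi_rpow_shift (by linarith) (by linarith)).const_mul α
  · apply ContinuousOn.aestronglyMeasurable _ measurableSet_Ioi
    exact ((continuousOn_const.mul (contOn_u hpos (-α-1))).mul
      ((contOn_u hpos (-α)).mul ((continuousOn_const.sub (contOn_u hpos (-α))).pow m)))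
  · rw [ae_restrict_iff' measurableSet_Ioi]
    refine ae_of_all _ fun z hz => ?_
    simp only [mem_Ioi] at hz
    obtain ⟨hu0, hu1⟩ := u_bounds hα (by linarith : (1:ℝ) ≤ z + c)
    have hp0 : (0:ℝ) ≤ (1 - (z+c)^(-α))^m := pow_nonneg (by linarith) m
    have hp1 : (1 - (z+c)^(-α))^m ≤ 1 := pow_le_one₀ (by linarith) (by linarith)
    have hf0 : 0 ≤ α * (z+c)^(-α-1) := by
      have := Real.rpow_nonneg (by linarith : (0:ℝ) ≤ z+c) (-α-1)
      positivity
    have hX0 : 0 ≤ (z+c)^(-α) * (1 - (z+c)^(-α))^m := mul_nonneg hu0 hp0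
    have hX1 : (z+c)^(-α) * (1 - (z+c)^(-α))^m ≤ 1 := by nlinarith
    rw [Real.norm_eq_abs, abs_of_nonneg (by positivity)]
    exact mul_le_of_le_one_right hf0 hX1

include hα hc in
lemma core_bound (m : ℕ) :
    ∫ z in Set.Ioi (1:ℝ), α * (z+c)^(-(α+2)) * (1-(z+c)^(-α))^m
      ≤ 2 * (min (1/(1+c)) (((m:ℝ)+1)^(-(1/α)))) ^ (α+1) := by
  have hα0 : (0:ℝ) < α := by linarith
  have h1c : (0:ℝ) < 1 + c := by linarith
  have hm1 : (0:ℝ) < (m:ℝ)+1 := by positivity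
  set b : ℝ := ((m:ℝ)+1)^(-(1/α)) with hbdef
  set a : ℝ := 1/(1+c) with hadef
  have ha0 : 0 < a := by positivity
  have hb0 : 0 < b := Real.rpow_pos_of_pos hm1 _
  have haP : a ^ (α+1) = (1+c)^(-(α+1)) := by
    rw [hadef, one_div, ← Real.rpow_neg_one (1+c), ← Real.rpow_mul h1c.le]
    ring_nf
  have hbP : b ^ (α+1) = ((m:ℝ)+1)^(-(1/α)*(α+1)) := by
    rw [hbdef, ← Real.rpow_mul hm1.le]
  have hmajor : ∀ A : ℝ, 1 ≤ A →
      ∫ z in Set.Ioi A, α * (z+c)^(-(α+2)) = α * ((A+c)^(-(α+1))/(α+1)) := by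
    intro A hA
    rw [MeasureTheory.integral_const_mul, integral_Ioi_rpow_shift (by linarith) (by linarith)]
    congr 1
    rw [show -(α+2)+1 = -(α+1) by ring, div_neg, neg_div, neg_neg]
  by_cases hcase : (m:ℝ)+1 ≤ (1+c)^α
  · -- min = a
    have hab : a ≤ b := by
      have h := Real.rpow_le_rpow_of_nonpos hm1 hcase
        (by rw [neg_nonpos]; positivity : -(1/α) ≤ 0)
      rw [← Real.rpow_mul h1c.le, show α * -(1/α) = -1 by field_simp,
        Real.rpow_neg_one] at h
      rw [hadef, hbdef, one_div (1+c)]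
      exact h
    rw [min_eq_left hab]
    have hIb : ∫ z in Set.Ioi (1:ℝ), α * (z+c)^(-(α+2)) * (1-(z+c)^(-α))^m
        ≤ ∫ z in Set.Ioi (1:ℝ), α * (z+c)^(-(α+2)) := by
      apply setIntegral_mono_on (F_integrable hα hc m le_rfl)
        ((integrableOn_Ioi_rpow_shift (by linarith) (by linarith)).const_mul α)
        measurableSet_Ioi
      intro z hz
      exact (F_ptwise hα hc m hz).1
    rw [hmajor 1 le_rfl] at hIb
    have hval : (0:ℝ) < (1+c)^(-(α+1)) := Real.rpow_pos_of_pos h1c _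
    have hfr : α * ((1+c)^(-(α+1))/(α+1)) = (α/(α+1)) * (1+c)^(-(α+1)) := by ring
    have hle1 : α/(α+1) ≤ 1 := by
      rw [div_le_one (by linarith)]; linarith
    calc ∫ z in Set.Ioi (1:ℝ), α * (z+c)^(-(α+2)) * (1-(z+c)^(-α))^m
        ≤ α * ((1+c)^(-(α+1))/(α+1)) := hIb
      _ = (α/(α+1)) * (1+c)^(-(α+1)) := hfr
      _ ≤ 1 * (1+c)^(-(α+1)) := mul_le_mul_of_nonneg_right hle1 hval.le
      _ ≤ 2 * a ^ (α+1) := by rw [haP]; linarith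
  · -- min = b
    push_neg at hcase
    have hba : b ≤ a := by
      have h := Real.rpow_le_rpow_of_nonpos (Real.rpow_pos_of_pos h1c α) hcase.le
        (by rw [neg_nonpos]; positivity : -(1/α) ≤ 0)
      rw [← Real.rpow_mul h1c.le, show α * -(1/α) = -1 by field_simp,
        Real.rpow_neg_one] at h
      rw [hadef, hbdef, one_div (1+c)]
      exact h
    rw [min_eq_right hba]
    set Z : ℝ := ((m:ℝ)+1)^(1/α) with hZdef
    have hZpos : 0 < Z := Real.rpow_pos_of_pos hm1 _
    have hZc : 1 + c < Z := by
      have h := Real.rpow_lt_rpow (Real.rpow_nonneg h1c.le α) hcase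
        (by positivity : (0:ℝ) < 1/α)
      rwa [← Real.rpow_mul h1c.le, show α * (1/α) = 1 by field_simp, Real.rpow_one] at h
    set zs : ℝ := Z - c with hzsdef
    have h1z : 1 < zs := by rw [hzsdef]; linarith
    have hzsc : zs + c = Z := by rw [hzsdef]; ring
    have hsplit : Set.Ioc 1 zs ∪ Set.Ioi zs = Set.Ioi (1:ℝ) := Set.Ioc_union_Ioi_eq_Ioi h1z.le
    have hFi : IntegrableOn (fun z : ℝ => α * (z+c)^(-(α+2)) * (1-(z+c)^(-α))^m) (Set.Ioi 1) :=
      F_integrable hα hc m le_rfl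
    have hdisj : Disjoint (Set.Ioc 1 zs) (Set.Ioi zs) := Set.Ioc_disjoint_Ioi le_rfl
    have hIocSub : Set.Ioc 1 zs ⊆ Set.Ioi (1:ℝ) := Set.Ioc_subset_Ioi_self
    have hIoiSub : Set.Ioi zs ⊆ Set.Ioi (1:ℝ) := Set.Ioi_subset_Ioi h1z.le
    rw [← hsplit, MeasureTheory.setIntegral_union hdisj measurableSet_Ioi
      (hFi.mono_set hIocSub) (hFi.mono_set hIoiSub)]
    have hZP : Z^(-(α+1)) = b^(α+1) := by
      rw [hbP, hZdef, ← Real.rpow_mul hm1.le]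
      congr 1
      ring
    have htail : ∫ z in Set.Ioi zs, α * (z+c)^(-(α+2)) * (1-(z+c)^(-α))^m ≤ b ^ (α+1) := by
      have h1 : ∫ z in Set.Ioi zs, α * (z+c)^(-(α+2)) * (1-(z+c)^(-α))^m
          ≤ ∫ z in Set.Ioi zs, α * (z+c)^(-(α+2)) := by
        apply setIntegral_mono_on (F_integrable hα hc m h1z.le)
          ((integrableOn_Ioi_rpow_shift (by linarith) (by rw [hzsc]; linarith)).const_mul α)
          measurableSet_Ioi
        intro z hz
        exact (F_ptwise hα hc m (lt_trans h1z hz)).1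
      rw [hmajor zs h1z.le, hzsc] at h1
      have hval : (0:ℝ) < Z^(-(α+1)) := Real.rpow_pos_of_pos hZpos _
      have hfr : α * (Z^(-(α+1))/(α+1)) = (α/(α+1)) * Z^(-(α+1)) := by ring
      have hle1 : α/(α+1) ≤ 1 := by
        rw [div_le_one (by linarith)]; linarith
      calc ∫ z in Set.Ioi zs, α * (z+c)^(-(α+2)) * (1-(z+c)^(-α))^m
          ≤ α * (Z^(-(α+1))/(α+1)) := h1
        _ = (α/(α+1)) * Z^(-(α+1)) := hfr
        _ ≤ 1 * Z^(-(α+1)) := mul_le_mul_of_nonneg_right hle1 hval.le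
        _ = b^(α+1) := by rw [one_mul, hZP]
    have hhead : ∫ z in Set.Ioc 1 zs, α * (z+c)^(-(α+2)) * (1-(z+c)^(-α))^m ≤ b ^ (α+1) := by
      set G : ℝ → ℝ := fun z => α * (z+c)^(-α-1) * ((z+c)^(-α) * (1 - (z+c)^(-α))^m) with hGdef
      have hGnn : ∀ z ∈ Set.Ioi (1:ℝ), 0 ≤ G z := by
        intro z hz
        simp only [mem_Ioi] at hz
        obtain ⟨hu0, hu1⟩ := u_bounds hα (by linarith : (1:ℝ) ≤ z + c)
        have hp0 : (0:ℝ) ≤ (1 - (z+c)^(-α))^m := pow_nonneg (by linarith) m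
        have h2 := Real.rpow_nonneg (by linarith : (0:ℝ) ≤ z+c) (-α-1)
        rw [hGdef]
        positivity
      have hGi : IntegrableOn G (Set.Ioi 1) := G_integrable hα hc m
      have hpt : ∀ z ∈ Set.Ioc (1:ℝ) zs,
          α * (z+c)^(-(α+2)) * (1-(z+c)^(-α))^m ≤ Z^(α-1) * G z := by
        intro z hz
        obtain ⟨hz1, hz2⟩ := hz
        have h0 : (0:ℝ) < z + c := by linarith
        have hFeq : α * (z+c)^(-(α+2)) * (1-(z+c)^(-α))^m = (z+c)^(α-1) * G z := by
          rw [hGdef]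
          rw [show (-(α+2)) = (α-1) + (-α-1) + (-α) by ring,
            Real.rpow_add h0, Real.rpow_add h0]
          ring
        rw [hFeq]
        apply mul_le_mul_of_nonneg_right _ (hGnn z (Set.mem_Ioi.mpr hz1))
        exact Real.rpow_le_rpow h0.le (by linarith : z + c ≤ Z) (by linarith : (0:ℝ) ≤ α - 1)
      have h1 : ∫ z in Set.Ioc 1 zs, α * (z+c)^(-(α+2)) * (1-(z+c)^(-α))^m
          ≤ ∫ z in Set.Ioc 1 zs, Z^(α-1) * G z :=
        setIntegral_mono_on (hFi.mono_set hIocSub)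
          ((hGi.mono_set hIocSub).const_mul _) measurableSet_Ioc hpt
      have h2 : ∫ z in Set.Ioc 1 zs, Z^(α-1) * G z = Z^(α-1) * ∫ z in Set.Ioc 1 zs, G z :=
        MeasureTheory.integral_const_mul _ _
      have h3 : ∫ z in Set.Ioc 1 zs, G z ≤ ∫ z in Set.Ioi 1, G z := by
        apply setIntegral_mono_set hGi
        · rw [EventuallyLE, ae_restrict_iff' measurableSet_Ioi]
          exact ae_of_all _ (fun z hz => hGnn z hz)
        · exact HasSubset.Subset.eventuallyLE hIocSub
      have h4 : ∫ z in Set.Ioi 1, G z ≤ 1/(((m:ℝ)+1)*((m:ℝ)+2)) := beta_tail_integral hα hc m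
      have hZnn : (0:ℝ) ≤ Z^(α-1) := Real.rpow_nonneg hZpos.le _
      have h5 : (1:ℝ)/(((m:ℝ)+1)*((m:ℝ)+2)) ≤ ((m:ℝ)+1)^(-(2:ℝ)) := by
        have he : ((m:ℝ)+1)^(-(2:ℝ)) = 1/(((m:ℝ)+1)*((m:ℝ)+1)) := by
          rw [show (-(2:ℝ)) = -((2:ℕ):ℝ) by norm_num, Real.rpow_neg hm1.le,
            Real.rpow_natCast, one_div, sq]
        rw [he]
        apply one_div_le_one_div_of_le (by positivity) (by nlinarith)
      have h6 : Z^(α-1) * (((m:ℝ)+1)^(-(2:ℝ))) = b^(α+1) := by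
        rw [hZdef, hbP, ← Real.rpow_mul hm1.le, ← Real.rpow_add hm1]
        congr 1
        field_simp
        ring
      calc ∫ z in Set.Ioc 1 zs, α * (z+c)^(-(α+2)) * (1-(z+c)^(-α))^m
          ≤ Z^(α-1) * ∫ z in Set.Ioc 1 zs, G z := by rw [← h2]; exact h1
        _ ≤ Z^(α-1) * ∫ z in Set.Ioi 1, G z := mul_le_mul_of_nonneg_left h3 hZnn
        _ ≤ Z^(α-1) * (1/(((m:ℝ)+1)*((m:ℝ)+2))) := mul_le_mul_of_nonneg_left h4 hZnn
        _ ≤ Z^(α-1) * (((m:ℝ)+1)^(-(2:ℝ))) := mul_le_mul_of_nonneg_left h5 hZnn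
        _ = b^(α+1) := h6
    linarith [htail, hhead]

include hα in
lemma factor_bounds {z : ℝ} (h1 : 1 ≤ z + c) :
    0 ≤ 1 - (z+c)^(-α) ∧ 1 - (z+c)^(-α) ≤ 1 := by
  obtain ⟨h0, h1'⟩ := u_bounds hα h1
  exact ⟨by linarith, by linarith⟩

end

section shape
variable {α : ℝ} (hα : 1 < α) {K : ℕ} (i : Fin K) (μ : Fin K → ℝ) {A : ℝ}
  (h1 : ∀ j, 1 ≤ A + μ j)

include hα h1 in
lemma phi_shape_nonneg : ∀ z ∈ Set.Ioi A,
    0 ≤ α * (z + μ i)^(-(α+1)) * ∏ j ∈ Finset.univ.erase i, (1 - (z + μ j)^(-α)) := by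
  intro z hz
  simp only [mem_Ioi] at hz
  have hb : ∀ j : Fin K, (1:ℝ) ≤ z + μ j := fun j => by have := h1 j; linarith
  have hP : 0 ≤ ∏ j ∈ Finset.univ.erase i, (1 - (z + μ j)^(-α)) :=
    Finset.prod_nonneg fun j _ => (factor_bounds hα (hb j)).1
  have h0 : (0:ℝ) ≤ (z + μ i)^(-(α+1)) := Real.rpow_nonneg (by have := hb i; linarith) _
  have hα0 : (0:ℝ) ≤ α := by linarith
  positivity

include hα h1 in
lemma phi_shape_prod_le_one : ∀ z ∈ Set.Ioi A,
    ∏ j ∈ Finset.univ.erase i, (1 - (z + μ j)^(-α)) ≤ 1 := by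
  intro z hz
  simp only [mem_Ioi] at hz
  have hb : ∀ j : Fin K, (1:ℝ) ≤ z + μ j := fun j => by have := h1 j; linarith
  exact Finset.prod_le_one (fun j _ => (factor_bounds hα (hb j)).1)
    (fun j _ => (factor_bounds hα (hb j)).2)

include hα h1 in
lemma phi_shape_integrable :
    MeasureTheory.IntegrableOn (fun z : ℝ => α * (z + μ i)^(-(α+1)) *
      ∏ j ∈ Finset.univ.erase i, (1 - (z + μ j)^(-α))) (Set.Ioi A) := by
  have hpos : ∀ j : Fin K, ∀ z ∈ Set.Ioi A, 0 < z + μ j := fun j z hz => by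
    have := h1 j; simp only [mem_Ioi] at hz; linarith
  apply Integrable.mono' (g := fun z : ℝ => α * (z + μ i)^(-(α+1)))
  · exact (integrableOn_Ioi_rpow_shift (by linarith) (by have := h1 i; linarith)).const_mul α
  · apply ContinuousOn.aestronglyMeasurable _ measurableSet_Ioi
    apply ContinuousOn.mul
    · exact continuousOn_const.mul (contOn_u (hpos i) _)
    · exact continuousOn_finset_prod _ fun j _ =>
        continuousOn_const.sub (contOn_u (hpos j) _)
  · rw [ae_restrict_iff' measurableSet_Ioi]
    refine ae_of_all _ fun z hz => ?_
    simp only [mem_Ioi] at hz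
    have hb : ∀ j : Fin K, (1:ℝ) ≤ z + μ j := fun j => by have := h1 j; linarith
    have hP0 : 0 ≤ ∏ j ∈ Finset.univ.erase i, (1 - (z + μ j)^(-α)) :=
      Finset.prod_nonneg fun j _ => (factor_bounds hα (hb j)).1
    have hP1 : ∏ j ∈ Finset.univ.erase i, (1 - (z + μ j)^(-α)) ≤ 1 :=
      phi_shape_prod_le_one hα i μ h1 z hz
    have hg0 : 0 ≤ α * (z + μ i)^(-(α+1)) := by
      have := Real.rpow_nonneg (by have := hb i; linarith : (0:ℝ) ≤ z + μ i) (-(α+1))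
      have hα0 : (0:ℝ) ≤ α := by linarith
      positivity
    rw [Real.norm_eq_abs, abs_of_nonneg (mul_nonneg hg0 hP0)]
    exact mul_le_of_le_one_right hg0 hP1

include hα in
lemma ftplProb_shift_lower (hK : 0 < K) (hnn : ∀ j, 0 ≤ μ j) :
    ∫ z in Set.Ioi (1:ℝ), α * (z + μ i)^(-(α+1)) *
        ∏ j ∈ Finset.univ.erase i, (1 - (z + μ j)^(-α))
      ≤ ftplProb α K i μ := by
  have hne : Nonempty (Fin K) := ⟨⟨0, hK⟩⟩
  set M := ⨅ j, μ j with hM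
  have hMnn : 0 ≤ M := le_ciInf hnn
  have hMle : ∀ j, M ≤ μ j := fun j => ciInf_le (Finite.bddBelow_range μ) j
  set f1 : ℝ → ℝ := fun w => α * (w + μ i)^(-(α+1)) *
    ∏ j ∈ Finset.univ.erase i, (1 - (w + μ j)^(-α)) with hf1
  have hshape : ∀ j, 1 ≤ (1 + -M) + μ j := fun j => by have := hMle j; linarith
  have hint : IntegrableOn f1 (Set.Ioi (1 + -M)) := phi_shape_integrable hα i μ hshape
  have hnn1 : ∀ z ∈ Set.Ioi (1 + -M), 0 ≤ f1 z := phi_shape_nonneg hα i μ hshape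
  unfold ftplProb
  have hfun : (fun z => α * (z + (μ i - M)) ^ (-(α + 1)) *
      ∏ j ∈ Finset.univ.erase i, (1 - (z + (μ j - M)) ^ (-α))) = fun z => f1 (z + -M) := by
    funext z
    rw [hf1]
    simp only
    congr 1
    · congr 2
      ring
    · refine Finset.prod_congr rfl fun j _ => ?_
      congr 2
      ring
  rw [← hM, hfun, setIntegral_Ioi_comp_add f1 1 (-M)]
  apply setIntegral_mono_set hint
  · rw [EventuallyLE, ae_restrict_iff' measurableSet_Ioi]
    exact ae_of_all _ hnn1
  · exact HasSubset.Subset.eventuallyLE (Set.Ioi_subset_Ioi (by linarith))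

end shape


/-- the stability bound. With sorted cumulative losses `L` (so arm `i : Fin K`
has rank `i+1`), exploration weights `q_i = (min(1/(1+ηL_i), (i+1)^{-1/α}))^{(α+1)/2}` and
exploration probabilities `p = q/∑q`, for every arm `i` and loss `ℓ ∈ [0,1]`:
`ℓ(φ_i(ηL) − φ_i(η(L+(ℓ/p_i)e_i))) ≤ e(α+1)η(∑_j q_j)q_i`. -/
theorem ftpl_pareto_stability_bound
    (α η : ℝ) (hα : 1 < α) (hη : 0 < η) (K : ℕ) (hK : 0 < K)
    (L : Fin K → ℝ) (hL0 : ∀ j, 0 ≤ L j) (hmono : Monotone L) (hfirst : L ⟨0, hK⟩ = 0)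
    (q p : Fin K → ℝ)
    (hq : ∀ j, q j = (min (1 / (1 + η * L j)) (((j : ℕ) + 1 : ℝ) ^ (-(1 / α)))) ^ ((α + 1) / 2))
    (hp : ∀ j, p j = q j / ∑ k, q k)
    (i : Fin K) (ℓ : ℝ) (hℓ0 : 0 ≤ ℓ) (hℓ1 : ℓ ≤ 1) :
    ℓ * (ftplProb α K i (fun j => η * L j)
          - ftplProb α K i (fun j => η * (L j + if j = i then ℓ / p i else 0)))
      ≤ Real.exp 1 * (α + 1) * η * (∑ j, q j) * q i := by
  have hne : Nonempty (Fin K) := ⟨⟨0, hK⟩⟩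
  have hαpos : (0:ℝ) < α := by linarith
  have hqpos : ∀ j, 0 < q j := by
    intro j
    rw [hq j]
    apply Real.rpow_pos_of_pos
    apply lt_min
    · apply div_pos one_pos
      have h1 := hL0 j
      nlinarith
    · exact Real.rpow_pos_of_pos (by positivity) _
  have hSpos : 0 < ∑ k, q k := Finset.sum_pos (fun j _ => hqpos j) Finset.univ_nonempty
  have hppos : 0 < p i := by rw [hp i]; exact div_pos (hqpos i) hSpos
  have hcnn : 0 ≤ η * L i := mul_nonneg hη.le (hL0 i)
  set d : ℝ := η * (ℓ / p i) with hd
  have hdnn : 0 ≤ d := by rw [hd]; exact mul_nonneg hη.le (div_nonneg hℓ0 hppos.le)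
  have hinf0 : (⨅ j, η * L j) = 0 := by
    apply le_antisymm
    · have h := ciInf_le (Finite.bddBelow_range fun j => η * L j) (⟨0, hK⟩ : Fin K)
      rwa [hfirst, mul_zero] at h
    · exact le_ciInf fun j => mul_nonneg hη.le (hL0 j)
  set lam1 : Fin K → ℝ := fun j => η * (L j + if j = i then ℓ / p i else 0) with hlam1
  have hlam1nn : ∀ j, 0 ≤ lam1 j := by
    intro j
    rw [hlam1]
    simp only
    have h1 := hL0 j
    by_cases hj : j = i
    · rw [if_pos hj]
      have h2 : 0 ≤ ℓ / p i := div_nonneg hℓ0 hppos.le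
      exact mul_nonneg hη.le (by linarith)
    · rw [if_neg hj]; positivity
  have hlam1i : lam1 i = η * L i + d := by
    have hif : (if i = i then ℓ / p i else 0) = ℓ / p i := if_pos rfl
    rw [hlam1]
    show η * (L i + if i = i then ℓ / p i else 0) = η * L i + d
    rw [hif, hd]; ring
  have hlam1j : ∀ j ∈ Finset.univ.erase i, lam1 j = η * L j := by
    intro j hj
    rw [hlam1]
    simp only [if_neg (Finset.ne_of_mem_erase hj)]
    ring
  -- evaluate φ at ηL
  have e0 : ftplProb α K i (fun j => η * L j) =
      ∫ z in Set.Ioi (1:ℝ), α * (z + η * L i)^(-(α+1)) *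
        ∏ j ∈ Finset.univ.erase i, (1 - (z + η * L j)^(-α)) := by
    simp only [ftplProb, hinf0, sub_zero]
  -- lower bound φ at lam1
  have hfeq : (fun z : ℝ => α * (z + lam1 i)^(-(α+1)) *
        ∏ j ∈ Finset.univ.erase i, (1 - (z + lam1 j)^(-α)))
      = (fun z : ℝ => α * (z + (η * L i + d))^(-(α+1)) *
        ∏ j ∈ Finset.univ.erase i, (1 - (z + η * L j)^(-α))) := by
    funext z
    rw [hlam1i]
    congr 1
    refine Finset.prod_congr rfl fun j hj => ?_
    rw [hlam1j j hj]
  have e1 : ∫ z in Set.Ioi (1:ℝ), α * (z + (η * L i + d))^(-(α+1)) *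
        ∏ j ∈ Finset.univ.erase i, (1 - (z + η * L j)^(-α))
      ≤ ftplProb α K i lam1 := by
    have h := ftplProb_shift_lower hα i lam1 hK hlam1nn
    rwa [hfeq] at h
  -- integrability
  have hsh0 : ∀ j : Fin K, (1:ℝ) ≤ 1 + (fun j => η * L j) j := fun j => by
    have := hL0 j; simp only; nlinarith
  have hF0int : IntegrableOn (fun z : ℝ => α * (z + η * L i)^(-(α+1)) *
      ∏ j ∈ Finset.univ.erase i, (1 - (z + η * L j)^(-α))) (Set.Ioi 1) :=
    phi_shape_integrable hα i (fun j => η * L j) hsh0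
  have hsh1 : ∀ j : Fin K, (1:ℝ) ≤ 1 + lam1 j := fun j => by have := hlam1nn j; linarith
  have hF1int : IntegrableOn (fun z : ℝ => α * (z + (η * L i + d))^(-(α+1)) *
      ∏ j ∈ Finset.univ.erase i, (1 - (z + η * L j)^(-α))) (Set.Ioi 1) := by
    have h := phi_shape_integrable hα i lam1 hsh1
    rwa [hfeq] at h
  -- pointwise bound
  have hpt : ∀ z ∈ Set.Ioi (1:ℝ),
      (α * (z + η * L i)^(-(α+1)) * ∏ j ∈ Finset.univ.erase i, (1 - (z + η * L j)^(-α)))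
        - (α * (z + (η * L i + d))^(-(α+1)) * ∏ j ∈ Finset.univ.erase i, (1 - (z + η * L j)^(-α)))
      ≤ (d * (α+1)) * (α * (z + η * L i)^(-(α+2)) * (1 - (z + η * L i)^(-α))^((i:ℕ))) := by
    intro z hz
    simp only [mem_Ioi] at hz
    have hzc : (0:ℝ) < z + η * L i := by nlinarith
    have hzc1 : (1:ℝ) ≤ z + η * L i := by nlinarith
    have hbase : z + (η * L i + d) = (z + η * L i) + d := by ring
    rw [hbase]
    set u : ℝ := (z + η * L i)^(-α) with hu
    obtain ⟨hu0, hu1⟩ := u_bounds hα (c := η * L i) hzc1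
    -- bound on the product
    have hfb : ∀ j : Fin K, (1:ℝ) ≤ z + η * L j := fun j => by
      have := hL0 j; nlinarith
    have hP0 : 0 ≤ ∏ j ∈ Finset.univ.erase i, (1 - (z + η * L j)^(-α)) :=
      Finset.prod_nonneg fun j _ => (factor_bounds hα (hfb j)).1
    have hPm : ∏ j ∈ Finset.univ.erase i, (1 - (z + η * L j)^(-α)) ≤ (1 - u)^((i:ℕ)) := by
      have hsub : Finset.Iio i ⊆ Finset.univ.erase i := fun j hj =>
        Finset.mem_erase.mpr ⟨ne_of_lt (Finset.mem_Iio.mp hj), Finset.mem_univ j⟩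
      calc ∏ j ∈ Finset.univ.erase i, (1 - (z + η * L j)^(-α))
          = (∏ j ∈ Finset.univ.erase i \ Finset.Iio i, (1 - (z + η * L j)^(-α)))
            * ∏ j ∈ Finset.Iio i, (1 - (z + η * L j)^(-α)) := (Finset.prod_sdiff hsub).symm
        _ ≤ 1 * ∏ j ∈ Finset.Iio i, (1 - (z + η * L j)^(-α)) := by
            apply mul_le_mul_of_nonneg_right
            · exact Finset.prod_le_one (fun j _ => (factor_bounds hα (hfb j)).1)
                (fun j _ => (factor_bounds hα (hfb j)).2)
            · exact Finset.prod_nonneg fun j _ => (factor_bounds hα (hfb j)).1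
        _ = ∏ j ∈ Finset.Iio i, (1 - (z + η * L j)^(-α)) := one_mul _
        _ ≤ ∏ j ∈ Finset.Iio i, (1 - u) := by
            apply Finset.prod_le_prod (fun j _ => (factor_bounds hα (hfb j)).1)
            intro j hj
            have hji : j < i := Finset.mem_Iio.mp hj
            have hLji : L j ≤ L i := hmono hji.le
            have h2 : z + η * L j ≤ z + η * L i := by nlinarith
            have h3 : (z + η * L i)^(-α) ≤ (z + η * L j)^(-α) :=
              Real.rpow_le_rpow_of_nonpos (by have := hfb j; linarith) h2 (by linarith)
            rw [hu]
            linarith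
        _ = (1 - u)^((i:ℕ)) := by rw [Finset.prod_const, Fin.card_Iio]
    -- MVT bound
    have hΔ0 : 0 ≤ (z + η * L i)^(-(α+1)) - ((z + η * L i) + d)^(-(α+1)) := by
      have h := Real.rpow_le_rpow_of_nonpos hzc (by linarith : z + η * L i ≤ (z + η * L i) + d)
        (by linarith : -(α+1) ≤ 0)
      linarith
    have hΔle : (z + η * L i)^(-(α+1)) - ((z + η * L i) + d)^(-(α+1))
        ≤ d * (α+1) * (z + η * L i)^(-(α+2)) := by
      have h := mvt_rpow_bound (β := α+1) (x := z + η * L i) (δ := d)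
        (by linarith) hzc hdnn
      rwa [show -(α+1) - 1 = -(α+2) by ring] at h
    have hm0 : (0:ℝ) ≤ (1-u)^((i:ℕ)) := pow_nonneg (by linarith) _
    have hcore0 : (0:ℝ) ≤ (z + η * L i)^(-(α+2)) := Real.rpow_nonneg hzc.le _
    calc (α * (z + η * L i)^(-(α+1)) * ∏ j ∈ Finset.univ.erase i, (1 - (z + η * L j)^(-α)))
        - (α * ((z + η * L i) + d)^(-(α+1)) * ∏ j ∈ Finset.univ.erase i, (1 - (z + η * L j)^(-α)))
        = α * ((z + η * L i)^(-(α+1)) - ((z + η * L i) + d)^(-(α+1)))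
          * ∏ j ∈ Finset.univ.erase i, (1 - (z + η * L j)^(-α)) := by ring
      _ ≤ α * ((z + η * L i)^(-(α+1)) - ((z + η * L i) + d)^(-(α+1))) * (1 - u)^((i:ℕ)) := by
          apply mul_le_mul_of_nonneg_left hPm
          positivity
      _ ≤ α * (d * (α+1) * (z + η * L i)^(-(α+2))) * (1 - u)^((i:ℕ)) := by
          apply mul_le_mul_of_nonneg_right _ hm0
          exact mul_le_mul_of_nonneg_left hΔle hαpos.le
      _ = (d * (α+1)) * (α * (z + η * L i)^(-(α+2)) * (1 - u)^((i:ℕ))) := by ring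
  -- the key difference bound
  have hminpos : 0 < min (1/(1 + η * L i)) ((((i:ℕ):ℝ)+1)^(-(1/α))) := by
    apply lt_min
    · apply div_pos one_pos; nlinarith [hL0 i]
    · exact Real.rpow_pos_of_pos (by positivity) _
  have key : ftplProb α K i (fun j => η * L j) - ftplProb α K i lam1
      ≤ (d * (α+1)) * (2 * (min (1/(1 + η * L i)) ((((i:ℕ):ℝ)+1)^(-(1/α))))^(α+1)) := by
    calc ftplProb α K i (fun j => η * L j) - ftplProb α K i lam1
        ≤ (∫ z in Set.Ioi (1:ℝ), α * (z + η * L i)^(-(α+1)) *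
            ∏ j ∈ Finset.univ.erase i, (1 - (z + η * L j)^(-α)))
          - ∫ z in Set.Ioi (1:ℝ), α * (z + (η * L i + d))^(-(α+1)) *
            ∏ j ∈ Finset.univ.erase i, (1 - (z + η * L j)^(-α)) := by
          rw [e0]
          exact sub_le_sub_left e1 _
      _ = ∫ z in Set.Ioi (1:ℝ),
            ((α * (z + η * L i)^(-(α+1)) * ∏ j ∈ Finset.univ.erase i, (1 - (z + η * L j)^(-α)))
            - (α * (z + (η * L i + d))^(-(α+1)) *
                ∏ j ∈ Finset.univ.erase i, (1 - (z + η * L j)^(-α)))) :=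
          (integral_sub hF0int hF1int).symm
      _ ≤ ∫ z in Set.Ioi (1:ℝ),
            (d * (α+1)) * (α * (z + η * L i)^(-(α+2)) * (1 - (z + η * L i)^(-α))^((i:ℕ))) := by
          apply setIntegral_mono_on (hF0int.sub hF1int)
            ((F_integrable hα hcnn ((i:ℕ)) le_rfl).const_mul _) measurableSet_Ioi hpt
      _ = (d * (α+1)) * ∫ z in Set.Ioi (1:ℝ),
            α * (z + η * L i)^(-(α+2)) * (1 - (z + η * L i)^(-α))^((i:ℕ)) :=
          MeasureTheory.integral_const_mul _ _
      _ ≤ (d * (α+1)) * (2 * (min (1/(1 + η * L i)) ((((i:ℕ):ℝ)+1)^(-(1/α))))^(α+1)) := by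
          apply mul_le_mul_of_nonneg_left (core_bound hα hcnn ((i:ℕ))) (by positivity)
  -- final arithmetic
  have hqi : q i = (min (1/(1 + η * L i)) ((((i:ℕ):ℝ)+1)^(-(1/α))))^((α+1)/2) := hq i
  have hqq : q i * q i = (min (1/(1 + η * L i)) ((((i:ℕ):ℝ)+1)^(-(1/α))))^(α+1) := by
    rw [hqi, ← Real.rpow_add hminpos, show (α+1)/2 + (α+1)/2 = α+1 by ring]
  have hℓsq : ℓ * ℓ ≤ 1 := by nlinarith
  have hexp : (2:ℝ) ≤ Real.exp 1 := by
    have h := Real.exp_one_gt_d9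
    linarith
  calc ℓ * (ftplProb α K i (fun j => η * L j) - ftplProb α K i lam1)
      ≤ ℓ * ((d * (α+1)) * (2 * (min (1/(1 + η * L i)) ((((i:ℕ):ℝ)+1)^(-(1/α))))^(α+1))) :=
        mul_le_mul_of_nonneg_left key hℓ0
    _ = ℓ * ((d * (α+1)) * (2 * (q i * q i))) := by rw [hqq]
    _ = (ℓ * ℓ) * (2 * ((α+1) * η * (∑ k, q k) * q i)) := by
        have hqine : q i ≠ 0 := (hqpos i).ne'
        have hSne : (∑ k, q k) ≠ 0 := hSpos.ne'
        rw [hd, hp i]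
        field_simp
    _ ≤ 1 * (2 * ((α+1) * η * (∑ k, q k) * q i)) := by
        apply mul_le_mul_of_nonneg_right hℓsq
        have := (hqpos i).le
        positivity
    _ = 2 * ((α+1) * η * (∑ k, q k) * q i) := one_mul _
    _ ≤ Real.exp 1 * ((α+1) * η * (∑ k, q k) * q i) := by
        apply mul_le_mul_of_nonneg_right hexp
        have := (hqpos i).le
        positivity
    _ = Real.exp 1 * (α + 1) * η * (∑ j, q j) * q i := by ring
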